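/- arXiv:0711.1738 — 3 statements merged into one kernel-verified Lean document; each statement's English description precedes it below -/
import Mathlib

section
/- For every integer m ≥ 1, t_F(m) = Σ_{k=0}^{m} (−1)^k · a^F_k(m) · q^{m−k}, as an identity in ℚ[q], where a^F_k(m) denotes the value of the function a^F_k at x = m. -/
/-- Falling factorial `x(x-1)⋯(x-n+1)` in `ℚ`. -/
def ffall (x : ℚ) (n : ℕ) : ℚ := ∏ i ∈ Finset.range n, (x - (i : ℚ))

/-- Generalized binomial coefficient: `C(x, n) = x(x-1)⋯(x-n+1)/n!` for `n ≥ 0`,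
and `C(x, n) = 0` for `n < 0`. -/
def gchoose (x : ℚ) (n : ℤ) : ℚ :=
  if 0 ≤ n then ffall x n.toNat / ((n.toNat).factorial : ℚ) else 0

/-- The function `a^F_k(x)` defined by
`a^F_k(x) = ∑_{p=0}^{k} (-1)^p C(x-1-p, p) ∑_{r=0}^{k-p} 3^r C(x-1-2p, r) C(p+1, k-p-r)
          + ∑_{p=1}^{k} (-1)^p C(x-1-p, p-1) ∑_{r=0}^{k-p} 3^r C(x-2p, r) C(p-1, k-p-r)`,
with `C` the generalized binomial coefficient. -/
def aF (k : ℕ) (x : ℚ) : ℚ :=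
  (∑ p ∈ Finset.range (k + 1), (-1 : ℚ) ^ p * gchoose (x - 1 - p) p *
    ∑ r ∈ Finset.range (k - p + 1),
      3 ^ r * gchoose (x - 1 - 2 * p) r * gchoose ((p : ℚ) + 1) ((k : ℤ) - p - r))
  + ∑ p ∈ Finset.Icc 1 k, (-1 : ℚ) ^ p * gchoose (x - 1 - p) ((p : ℤ) - 1) *
    ∑ r ∈ Finset.range (k - p + 1),
      3 ^ r * gchoose (x - 2 * p) r * gchoose ((p : ℚ) - 1) ((k : ℤ) - p - r)

/-- The large-`q` dominant diagonal entry of the chromatic-polynomial transfer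
matrix of the width-`m` square-lattice strip with free boundary conditions. -/
noncomputable def tFq (m : ℕ) : Polynomial ℚ :=
  ∑ c : Composition m,
    (c.blocks.map (fun (ℓ : ℕ) =>
      (-1 : Polynomial ℚ) ^ (ℓ - 1) * (Polynomial.X - Polynomial.C (ℓ : ℚ)))).prod

lemma gchoose_neg {x : ℚ} {n : ℤ} (h : n < 0) : gchoose x n = 0 := by
  simp [gchoose, not_le.mpr h]

lemma gchoose_coe (x : ℚ) (s : ℕ) : gchoose x s = ffall x s / (s.factorial : ℚ) := by
  simp [gchoose]

lemma gchoose_zero (x : ℚ) : gchoose x 0 = 1 := by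
  simp [gchoose, ffall]

lemma ffall_succ (x : ℚ) (s : ℕ) : ffall x (s+1) = ffall x s * (x - s) := by
  simp [ffall, Finset.prod_range_succ]

lemma ffall_succ_left (x : ℚ) (s : ℕ) : ffall x (s+1) = x * ffall (x-1) s := by
  unfold ffall
  rw [Finset.prod_range_succ']
  simp only [Nat.cast_zero, sub_zero, Nat.cast_add, Nat.cast_one]
  rw [mul_comm]
  congr 1
  apply Finset.prod_congr rfl
  intro i _
  push_cast
  ring

lemma gchoose_one (x : ℚ) : gchoose x 1 = x := by
  have : gchoose x 1 = gchoose x ((1:ℕ):ℤ) := by norm_num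
  rw [this, gchoose_coe]
  simp [ffall_succ, ffall]

lemma gchoose_pascal (x : ℚ) (n : ℤ) :
    gchoose x n = gchoose (x-1) n + gchoose (x-1) (n-1) := by
  rcases lt_trichotomy n 0 with h | h | h
  · rw [gchoose_neg h, gchoose_neg h, gchoose_neg (by omega)]; ring
  · subst h
    rw [gchoose_zero, gchoose_zero, gchoose_neg (by norm_num)]; ring
  · obtain ⟨s, rfl⟩ : ∃ s : ℕ, n = (s:ℤ) + 1 := ⟨(n-1).toNat, by omega⟩
    have h1 : ((s:ℤ) + 1) = ((s+1 : ℕ) : ℤ) := by push_cast; ring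
    have h2 : ((s:ℤ) + 1 - 1) = ((s : ℕ) : ℤ) := by push_cast; ring
    rw [h1]
    have h2 : ((s+1 : ℕ) : ℤ) - 1 = ((s : ℕ) : ℤ) := by push_cast; ring
    rw [h2, gchoose_coe, gchoose_coe, gchoose_coe]
    have hfac : ((s+1).factorial : ℚ) = (s+1) * s.factorial := by
      rw [Nat.factorial_succ]; push_cast; ring
    have hne : ((s+1 : ℕ).factorial : ℚ) ≠ 0 := by positivity
    have hne2 : ((s : ℕ).factorial : ℚ) ≠ 0 := by positivity
    rw [div_add_div _ _ hne hne2, div_eq_div_iff hne (by positivity)]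
    rw [ffall_succ_left x s, ffall_succ (x-1) s]
    rw [hfac]
    ring

lemma ffall_nat_zero (a m : ℕ) (h : a < m) : ffall (a : ℚ) m = 0 := by
  apply Finset.prod_eq_zero (Finset.mem_range.mpr h)
  simp

lemma gchoose_nat_zero {a : ℕ} {n : ℤ} (h : (a:ℤ) < n) : gchoose (a:ℚ) n = 0 := by
  have h0 : 0 ≤ n := by omega
  obtain ⟨s, rfl⟩ : ∃ s : ℕ, n = (s:ℤ) := ⟨n.toNat, by omega⟩
  rw [gchoose_coe, ffall_nat_zero a s (by exact_mod_cast h)]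
  simp

lemma gchoose_neg_one (s : ℕ) : gchoose (-1 : ℚ) s = (-1)^s := by
  rw [gchoose_coe]
  rw [div_eq_iff (by positivity)]
  induction s with
  | zero => simp [ffall]
  | succ n ih =>
    rw [ffall_succ, ih, Nat.factorial_succ, pow_succ]
    push_cast; ring

lemma gchoose_neg_two (s : ℕ) : gchoose (-2 : ℚ) s = (-1)^s * (s+1) := by
  rw [gchoose_coe]
  rw [div_eq_iff (by positivity)]
  induction s with
  | zero => simp [ffall]
  | succ n ih =>
    rw [ffall_succ, ih, Nat.factorial_succ, pow_succ]
    push_cast; ring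

def Inn (p : ℕ) (x : ℚ) (k : ℕ) : ℚ :=
  ∑ r ∈ Finset.range (k+1), 3^r * gchoose (x - 1 - 2*p) r * gchoose (p : ℚ) ((k:ℤ) - p - r)

def Ucn (k : ℕ) (x : ℚ) : ℚ :=
  ∑ p ∈ Finset.range (k+1), (-1)^p * gchoose (x - 1 - p) p * Inn p x k

lemma Inn_sum_ext (p : ℕ) (x : ℚ) (k M : ℕ) (h : k+1 ≤ M) :
    ∑ r ∈ Finset.range M, 3^r * gchoose (x - 1 - 2*p) r * gchoose (p : ℚ) ((k:ℤ) - p - r)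
      = Inn p x k := by
  unfold Inn
  symm
  apply Finset.sum_subset (Finset.range_subset_range.mpr h)
  intro r hr hnr
  simp only [Finset.mem_range, not_lt] at hnr
  have hz : gchoose (p:ℚ) ((k:ℤ) - p - r) = 0 := gchoose_neg (by omega)
  rw [hz]
  ring

lemma Inn_vanish (p : ℕ) (x : ℚ) (k : ℕ) (h : (k:ℤ) < p) : Inn p x k = 0 := by
  unfold Inn
  apply Finset.sum_eq_zero
  intro r _
  have hz : gchoose (p:ℚ) ((k:ℤ) - p - r) = 0 := gchoose_neg (by omega)
  rw [hz]
  ring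

lemma Ucn_sum_ext (k M : ℕ) (x : ℚ) (h : k+1 ≤ M) :
    ∑ p ∈ Finset.range M, (-1)^p * gchoose (x - 1 - p) p * Inn p x k = Ucn k x := by
  unfold Ucn
  symm
  apply Finset.sum_subset (Finset.range_subset_range.mpr h)
  intro p hp hnp
  simp only [Finset.mem_range, not_lt] at hnp
  rw [Inn_vanish p x k (by omega)]
  ring

lemma Inn_pascal (p k : ℕ) (x : ℚ) :
    Inn p x (k+1) = Inn p (x-1) (k+1) + 3 * Inn p (x-1) k := by
  have key : ∀ r : ℕ,
      (3:ℚ)^r * gchoose (x - 1 - 2*p) r * gchoose (p:ℚ) (((k+1:ℕ):ℤ) - p - r)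
      = 3^r * gchoose ((x-1) - 1 - 2*p) r * gchoose (p:ℚ) (((k+1:ℕ):ℤ) - p - r)
        + 3^r * gchoose ((x-1) - 1 - 2*p) ((r:ℤ)-1) * gchoose (p:ℚ) (((k+1:ℕ):ℤ) - p - r) := by
    intro r
    rw [gchoose_pascal (x - 1 - 2*p) r]
    have hx : x - 1 - 2*(p:ℚ) - 1 = (x-1) - 1 - 2*p := by ring
    rw [hx]; ring
  rw [show Inn p x (k+1) = ∑ r ∈ Finset.range (k+2),
      (3:ℚ)^r * gchoose (x - 1 - 2*p) r * gchoose (p:ℚ) (((k+1:ℕ):ℤ) - p - r) from rfl]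
  rw [Finset.sum_congr rfl (fun r _ => key r), Finset.sum_add_distrib]
  congr 1
  rw [Finset.sum_range_succ']
  have h0 : (3:ℚ)^(0:ℕ) * gchoose ((x-1) - 1 - 2*p) (((0:ℕ):ℤ)-1)
      * gchoose (p:ℚ) (((k+1:ℕ):ℤ) - p - ((0:ℕ):ℤ)) = 0 := by
    have hz : gchoose (x - 1 - 1 - 2*(p:ℚ)) (((0:ℕ):ℤ)-1) = 0 := gchoose_neg (by omega)
    rw [hz]; ring
  rw [h0, add_zero]
  unfold Inn
  rw [Finset.mul_sum]
  apply Finset.sum_congr rfl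
  intro r _
  have h1 : ((r+1:ℕ):ℤ) - 1 = (r:ℤ) := by push_cast; ring
  have h2 : (((k+1:ℕ):ℤ) - p - ((r+1:ℕ):ℤ)) = ((k:ℕ):ℤ) - p - r := by push_cast; ring
  rw [h1, h2, pow_succ]
  ring

lemma Inn_shift (s K : ℕ) (x : ℚ) :
    Inn (s+1) x (K+2) = Inn s (x-2) (K+1) + Inn s (x-2) K := by
  have key : ∀ r : ℕ,
      (3:ℚ)^r * gchoose (x - 1 - 2*(s+1:ℕ)) r * gchoose ((s+1:ℕ):ℚ) (((K+2:ℕ):ℤ) - (s+1:ℕ) - r)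
      = 3^r * gchoose ((x-2) - 1 - 2*s) r * gchoose (s:ℚ) (((K+1:ℕ):ℤ) - s - r)
        + 3^r * gchoose ((x-2) - 1 - 2*s) r * gchoose (s:ℚ) (((K:ℕ):ℤ) - s - r) := by
    intro r
    have hc : ((s+1:ℕ):ℚ) = (s:ℚ) + 1 := by push_cast; ring
    have hj : (((K+2:ℕ):ℤ) - (s+1:ℕ) - r) = ((K+1:ℕ):ℤ) - s - r := by push_cast; ring
    have hx : x - 1 - 2*((s+1:ℕ):ℚ) = (x-2) - 1 - 2*s := by push_cast; ring
    rw [hx, hj, hc, gchoose_pascal ((s:ℚ)+1) (((K+1:ℕ):ℤ) - s - r)]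
    have hs : (s:ℚ) + 1 - 1 = (s:ℚ) := by ring
    have hj2 : ((K+1:ℕ):ℤ) - s - r - 1 = ((K:ℕ):ℤ) - s - r := by push_cast; ring
    rw [hs, hj2]
    ring
  rw [show Inn (s+1) x (K+2) = ∑ r ∈ Finset.range (K+3),
      (3:ℚ)^r * gchoose (x - 1 - 2*(s+1:ℕ)) r * gchoose ((s+1:ℕ):ℚ) (((K+2:ℕ):ℤ) - (s+1:ℕ) - r) from rfl]
  rw [Finset.sum_congr rfl (fun r _ => key r), Finset.sum_add_distrib]
  congr 1
  · exact Inn_sum_ext s (x-2) (K+1) (K+3) (by omega)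
  · exact Inn_sum_ext s (x-2) K (K+3) (by omega)

lemma Ucn_rec (K : ℕ) (x : ℚ) :
    Ucn (K+2) x = Ucn (K+2) (x-1) + 3*Ucn (K+1) (x-1) - Ucn (K+1) (x-2) - Ucn K (x-2) := by
  have key : ∀ p : ℕ,
      ((-1:ℚ))^p * gchoose (x - 1 - p) p * Inn p x (K+2)
      = ((-1:ℚ))^p * gchoose ((x-1) - 1 - p) p * Inn p (x-1) (K+2)
        + 3 * (((-1:ℚ))^p * gchoose ((x-1) - 1 - p) p * Inn p (x-1) (K+1))
        + ((-1:ℚ))^p * gchoose ((x-1) - 1 - p) ((p:ℤ)-1) * Inn p x (K+2) := by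
    intro p
    rw [gchoose_pascal (x - 1 - (p:ℚ)) p]
    have hx : x - 1 - (p:ℚ) - 1 = (x-1) - 1 - p := by ring
    rw [hx, Inn_pascal p (K+1) x]
    ring
  rw [show Ucn (K+2) x = ∑ p ∈ Finset.range (K+3),
      ((-1:ℚ))^p * gchoose (x - 1 - p) p * Inn p x (K+2) from rfl]
  rw [Finset.sum_congr rfl (fun p _ => key p), Finset.sum_add_distrib, Finset.sum_add_distrib]
  have e1 : ∑ p ∈ Finset.range (K+3),
      ((-1:ℚ))^p * gchoose ((x-1) - 1 - p) p * Inn p (x-1) (K+2) = Ucn (K+2) (x-1) := rfl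
  have e2 : ∑ p ∈ Finset.range (K+3),
      3 * (((-1:ℚ))^p * gchoose ((x-1) - 1 - p) p * Inn p (x-1) (K+1))
      = 3 * Ucn (K+1) (x-1) := by
    rw [← Finset.mul_sum]
    rw [Ucn_sum_ext (K+1) (K+3) (x-1) (by omega)]
  have e3 : ∑ p ∈ Finset.range (K+3),
      ((-1:ℚ))^p * gchoose ((x-1) - 1 - p) ((p:ℤ)-1) * Inn p x (K+2)
      = - Ucn (K+1) (x-2) - Ucn K (x-2) := by
    rw [Finset.sum_range_succ']
    have h0 : ((-1:ℚ))^(0:ℕ) * gchoose ((x-1) - 1 - ((0:ℕ):ℚ)) (((0:ℕ):ℤ)-1) * Inn 0 x (K+2) = 0 := by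
      rw [gchoose_neg (by omega)]; ring
    rw [h0, add_zero]
    have key2 : ∀ s : ℕ,
        ((-1:ℚ))^(s+1) * gchoose ((x-1) - 1 - ((s+1:ℕ):ℚ)) (((s+1:ℕ):ℤ)-1) * Inn (s+1) x (K+2)
        = (- ((-1:ℚ)^s * gchoose ((x-2) - 1 - s) s * Inn s (x-2) (K+1)))
          + (- ((-1:ℚ)^s * gchoose ((x-2) - 1 - s) s * Inn s (x-2) K)) := by
      intro s
      have h1 : ((s+1:ℕ):ℤ) - 1 = (s:ℤ) := by push_cast; ring
      have h2 : (x-1) - 1 - ((s+1:ℕ):ℚ) = (x-2) - 1 - s := by push_cast; ring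
      rw [h1, h2, Inn_shift s K x, pow_succ]
      ring
    rw [Finset.sum_congr rfl (fun s _ => key2 s), Finset.sum_add_distrib]
    rw [Finset.sum_neg_distrib, Finset.sum_neg_distrib]
    rw [Ucn_sum_ext (K+1) (K+2) (x-2) (by omega), Ucn_sum_ext K (K+2) (x-2) (by omega)]
    ring
  rw [e1, e2, e3]
  ring

def Uc (k : ℤ) (x : ℚ) : ℚ := if 0 ≤ k then Ucn k.toNat x else 0

lemma Uc_ofNat (k : ℕ) (x : ℚ) : Uc (k : ℤ) x = Ucn k x := by
  simp [Uc]

lemma Uc_neg {k : ℤ} (h : k < 0) (x : ℚ) : Uc k x = 0 := by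
  simp [Uc, not_le.mpr h]

lemma Ucn_zero (x : ℚ) : Ucn 0 x = 1 := by
  norm_num [Ucn, Inn, gchoose_zero]

lemma Ucn_one (x : ℚ) : Ucn 1 x = 2*x - 1 := by
  have h1 : gchoose ((0:ℕ):ℚ) 1 = 0 := by rw [gchoose_one]; norm_num
  have h2 : gchoose ((1:ℕ):ℚ) (-1) = 0 := gchoose_neg (by norm_num)
  norm_num [Ucn, Inn, Finset.sum_range_succ, gchoose_zero, gchoose_one]
  rw [show gchoose (1:ℚ) (-1) = 0 from gchoose_neg (by norm_num)]
  ring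

lemma Uc_rec (k : ℤ) (x : ℚ) :
    Uc k x = Uc k (x-1) + 3*Uc (k-1) (x-1) - Uc (k-1) (x-2) - Uc (k-2) (x-2) := by
  rcases lt_trichotomy k 0 with h | h | h
  · rw [Uc_neg h, Uc_neg h, Uc_neg (by omega), Uc_neg (by omega), Uc_neg (by omega)]; ring
  · subst h
    rw [show (0:ℤ) = ((0:ℕ):ℤ) from rfl, Uc_ofNat, Uc_ofNat]
    rw [show ((0:ℕ):ℤ) - 1 = (-1 : ℤ) by norm_num, show ((0:ℕ):ℤ) - 2 = (-2 : ℤ) by norm_num]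
    rw [Uc_neg (by norm_num), Uc_neg (by norm_num), Uc_neg (by norm_num)]
    rw [Ucn_zero, Ucn_zero]; ring
  · rcases eq_or_lt_of_le (by omega : (1:ℤ) ≤ k) with h1 | h1
    · subst h1
      have e1 : ∀ y : ℚ, Uc 1 y = 2*y - 1 := fun y => by
        rw [show (1:ℤ) = ((1:ℕ):ℤ) from rfl, Uc_ofNat, Ucn_one]
      have e0 : ∀ y : ℚ, Uc 0 y = 1 := fun y => by
        rw [show (0:ℤ) = ((0:ℕ):ℤ) from rfl, Uc_ofNat, Ucn_zero]
      rw [show (1:ℤ) - 1 = 0 by norm_num, show (1:ℤ) - 2 = -1 by norm_num]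
      rw [e1, e1, e0, e0, Uc_neg (by norm_num)]; ring
    · obtain ⟨K, rfl⟩ : ∃ K : ℕ, k = ((K + 2 : ℕ) : ℤ) := ⟨(k-2).toNat, by omega⟩
      rw [Uc_ofNat, Uc_ofNat]
      rw [show ((K+2:ℕ):ℤ) - 1 = ((K+1:ℕ):ℤ) by push_cast; ring,
          show ((K+2:ℕ):ℤ) - 2 = ((K:ℕ):ℤ) by push_cast; ring]
      rw [Uc_ofNat, Uc_ofNat, Uc_ofNat]
      exact Ucn_rec K x

def AZ (k : ℤ) (x : ℚ) : ℚ := Uc k x + Uc (k-1) x - Uc (k-1) (x-1)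

lemma AZ_rec (k : ℤ) (x : ℚ) :
    AZ k x = AZ k (x-1) + 3*AZ (k-1) (x-1) - AZ (k-1) (x-2) - AZ (k-2) (x-2) := by
  have h1 := Uc_rec k x
  have h2 := Uc_rec (k-1) x
  have h3 := Uc_rec (k-1) (x-1)
  simp only [AZ]
  rw [show k-1-1 = k-2 by ring, show k-2-1 = k-3 by ring, show k-1-2 = k-3 by ring] at *
  rw [show x-1-1 = x-2 by ring, show x-1-2 = x-3 by ring, show x-2-1 = x-3 by ring] at *
  linarith

lemma AZ_neg {k : ℤ} (h : k < 0) (x : ℚ) : AZ k x = 0 := by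
  simp [AZ, Uc_neg, h, Uc_neg (show k - 1 < 0 by omega)]

lemma Inn_sum_ext' (p : ℕ) (x : ℚ) (k M : ℕ) (h : (k:ℤ) - p < M) :
    ∑ r ∈ Finset.range M, 3^r * gchoose (x - 1 - 2*p) r * gchoose (p : ℚ) ((k:ℤ) - p - r)
      = Inn p x k := by
  rcases le_total M (k+1) with hM | hM
  · unfold Inn
    apply Finset.sum_subset (Finset.range_subset_range.mpr hM)
    intro r hr hnr
    simp only [Finset.mem_range, not_lt] at hnr
    have hz : gchoose (p:ℚ) ((k:ℤ) - p - r) = 0 := gchoose_neg (by omega)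
    rw [hz]; ring
  · exact Inn_sum_ext p x k M hM

lemma sum_Icc_one (K : ℕ) (f : ℕ → ℚ) :
    ∑ p ∈ Finset.Icc 1 (K+1), f p = ∑ s ∈ Finset.range (K+1), f (s+1) := by
  have h : Finset.range (K+2) = insert 0 (Finset.Icc 1 (K+1)) := by
    ext a
    simp only [Finset.mem_range, Finset.mem_insert, Finset.mem_Icc]
    omega
  have h2 := Finset.sum_range_succ' f (K+1)
  rw [h, Finset.sum_insert (by simp)] at h2
  linarith

lemma L_S1 (k : ℕ) (x : ℚ) :
    (∑ p ∈ Finset.range (k + 1), (-1 : ℚ) ^ p * gchoose (x - 1 - p) p *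
      ∑ r ∈ Finset.range (k - p + 1),
        3 ^ r * gchoose (x - 1 - 2 * p) r * gchoose ((p : ℚ) + 1) ((k : ℤ) - p - r))
    = Ucn k x + Uc ((k:ℤ)-1) x := by
  have step1 : ∀ p ∈ Finset.range (k+1),
      (-1 : ℚ) ^ p * gchoose (x - 1 - p) p *
        ∑ r ∈ Finset.range (k - p + 1),
          3 ^ r * gchoose (x - 1 - 2 * p) r * gchoose ((p : ℚ) + 1) ((k : ℤ) - p - r)
      = (-1 : ℚ) ^ p * gchoose (x - 1 - p) p * Inn p x k
        + (-1 : ℚ) ^ p * gchoose (x - 1 - p) p *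
          ∑ r ∈ Finset.range (k + 1),
            3 ^ r * gchoose (x - 1 - 2 * p) r * gchoose ((p:ℚ)) ((k : ℤ) - 1 - p - r) := by
    intro p hp
    simp only [Finset.mem_range] at hp
    have hext : ∑ r ∈ Finset.range (k - p + 1),
        (3:ℚ) ^ r * gchoose (x - 1 - 2 * p) r * gchoose ((p : ℚ) + 1) ((k : ℤ) - p - r)
        = ∑ r ∈ Finset.range (k + 1),
        (3:ℚ) ^ r * gchoose (x - 1 - 2 * p) r * gchoose ((p : ℚ) + 1) ((k : ℤ) - p - r) := by
      apply Finset.sum_subset (Finset.range_subset_range.mpr (by omega))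
      intro r hr hnr
      simp only [Finset.mem_range, not_lt] at hnr
      have hz : gchoose ((p:ℚ)+1) ((k:ℤ) - p - r) = 0 := gchoose_neg (by omega)
      rw [hz]; ring
    rw [hext]
    have hpas : ∀ r : ℕ,
        (3:ℚ) ^ r * gchoose (x - 1 - 2 * p) r * gchoose ((p : ℚ) + 1) ((k : ℤ) - p - r)
        = 3 ^ r * gchoose (x - 1 - 2 * p) r * gchoose ((p:ℚ)) ((k : ℤ) - p - r)
          + 3 ^ r * gchoose (x - 1 - 2 * p) r * gchoose ((p:ℚ)) ((k : ℤ) - 1 - p - r) := by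
      intro r
      rw [gchoose_pascal ((p:ℚ)+1) ((k:ℤ) - p - r)]
      rw [show (p:ℚ) + 1 - 1 = (p:ℚ) by ring, show (k:ℤ) - p - r - 1 = (k:ℤ) - 1 - p - r by ring]
      ring
    rw [Finset.sum_congr rfl (fun r _ => hpas r), Finset.sum_add_distrib]
    rw [show (∑ r ∈ Finset.range (k+1),
        ((3:ℚ) ^ r * gchoose (x - 1 - 2 * p) r * gchoose ((p:ℚ)) ((k : ℤ) - p - r)))
        = Inn p x k from rfl]
    ring
  rw [Finset.sum_congr rfl step1, Finset.sum_add_distrib]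
  congr 1
  cases k with
  | zero =>
    rw [show ((0:ℕ):ℤ) - 1 = (-1:ℤ) by norm_num, Uc_neg (by norm_num)]
    rw [Finset.sum_range_succ, Finset.sum_range_succ]
    have hz : gchoose ((0:ℕ):ℚ) ((-1:ℤ) - ((0:ℕ):ℤ) - ((0:ℕ):ℤ)) = 0 := gchoose_neg (by norm_num)
    simp only [Finset.sum_empty, Finset.range_zero]
    rw [hz]
    ring
  | succ K =>
    rw [show ((K+1:ℕ):ℤ) - 1 = ((K:ℕ):ℤ) by push_cast; ring, Uc_ofNat]
    have inner : ∀ p : ℕ, (∑ r ∈ Finset.range (K+2),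
        (3:ℚ)^r * gchoose (x-1-2*p) r * gchoose (p:ℚ) (((K:ℕ):ℤ) - p - r)) = Inn p x K :=
      fun p => Inn_sum_ext p x K (K+2) (by omega)
    rw [Finset.sum_congr rfl (fun p _ => by rw [inner p])]
    exact Ucn_sum_ext K (K+2) x (by omega)

lemma L_S2 (k : ℕ) (x : ℚ) :
    (∑ p ∈ Finset.Icc 1 k, (-1 : ℚ) ^ p * gchoose (x - 1 - p) ((p : ℤ) - 1) *
      ∑ r ∈ Finset.range (k - p + 1),
        3 ^ r * gchoose (x - 2 * p) r * gchoose ((p : ℚ) - 1) ((k : ℤ) - p - r))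
    = - Uc ((k:ℤ)-1) (x-1) := by
  cases k with
  | zero =>
    rw [show ((0:ℕ):ℤ) - 1 = (-1:ℤ) by norm_num, Uc_neg (by norm_num)]
    simp
  | succ K =>
    rw [sum_Icc_one]
    rw [show ((K+1:ℕ):ℤ) - 1 = ((K:ℕ):ℤ) by push_cast; ring, Uc_ofNat]
    rw [show -Ucn K (x-1) = ∑ s ∈ Finset.range (K+1),
        -((-1:ℚ)^s * gchoose ((x-1) - 1 - s) s * Inn s (x-1) K) from by
      rw [Finset.sum_neg_distrib]; rfl]
    apply Finset.sum_congr rfl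
    intro s hs
    simp only [Finset.mem_range] at hs
    have hinner : (∑ r ∈ Finset.range (K + 1 - (s+1) + 1),
        (3:ℚ) ^ r * gchoose (x - 2 * (s+1:ℕ)) r * gchoose (((s+1:ℕ):ℚ) - 1) (((K+1:ℕ):ℤ) - (s+1:ℕ) - r))
        = Inn s (x-1) K := by
      rw [← Inn_sum_ext' s (x-1) K (K + 1 - (s+1) + 1) (by omega)]
      apply Finset.sum_congr rfl
      intro r _
      rw [show x - 2 * ((s+1:ℕ):ℚ) = (x-1) - 1 - 2*s by push_cast; ring]
      rw [show ((s+1:ℕ):ℚ) - 1 = (s:ℚ) by push_cast; ring]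
      rw [show ((K+1:ℕ):ℤ) - (s+1:ℕ) - r = ((K:ℕ):ℤ) - s - r by push_cast; ring]
    rw [hinner]
    rw [show ((s+1:ℕ):ℤ) - 1 = ((s:ℕ):ℤ) by push_cast; ring]
    rw [show x - 1 - ((s+1:ℕ):ℚ) = (x-1) - 1 - s by push_cast; ring]
    rw [pow_succ]
    ring

lemma aF_eq_AZ (k : ℕ) (x : ℚ) : aF k x = AZ (k:ℤ) x := by
  unfold aF AZ
  rw [L_S1, L_S2, Uc_ofNat]
  ring

lemma S1_vanish_main (K : ℕ) : ∀ p ∈ Finset.range (K+1),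
    (-1 : ℚ) ^ p * gchoose (((K+1:ℕ):ℚ) - 1 - p) p *
      (∑ r ∈ Finset.range (K+2 - p + 1),
        (3:ℚ) ^ r * gchoose (((K+1:ℕ):ℚ) - 1 - 2 * p) r * gchoose ((p : ℚ) + 1) (((K+2:ℕ) : ℤ) - p - r)) = 0 := by
  intro p hp
  simp only [Finset.mem_range] at hp
  rcases le_or_gt (2*p) K with h2p | h2p
  · -- inner sum vanishes termwise
    have hz : (∑ r ∈ Finset.range (K+2 - p + 1),
        (3:ℚ) ^ r * gchoose (((K+1:ℕ):ℚ) - 1 - 2 * p) r * gchoose ((p : ℚ) + 1) (((K+2:ℕ) : ℤ) - p - r)) = 0 := by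
      apply Finset.sum_eq_zero
      intro r _
      rcases le_or_gt r (K - 2*p) with hr | hr
      · have ha : gchoose (((p+1:ℕ)):ℚ) (((K+2:ℕ) : ℤ) - p - r) = 0 :=
          gchoose_nat_zero (by push_cast; omega)
        rw [show ((p:ℚ)+1) = ((p+1:ℕ):ℚ) by push_cast; ring, ha]
        ring
      · have ha : gchoose (((K - 2*p:ℕ)):ℚ) ((r:ℕ):ℤ) = 0 :=
          gchoose_nat_zero (by push_cast; omega)
        rw [show (((K+1:ℕ):ℚ) - 1 - 2 * p) = ((K - 2*p:ℕ):ℚ) by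
          push_cast [Nat.cast_sub (by omega : 2*p ≤ K)]; ring, ha]
        ring
    rw [hz]; ring
  · -- outer gchoose vanishes
    have ha : gchoose (((K - p:ℕ)):ℚ) ((p:ℕ):ℤ) = 0 := gchoose_nat_zero (by push_cast; omega)
    rw [show (((K+1:ℕ):ℚ) - 1 - p) = ((K - p:ℕ):ℚ) by
      push_cast [Nat.cast_sub (by omega : p ≤ K)]; ring, ha]
    ring

lemma S2_vanish_main (K : ℕ) : ∀ s ∈ Finset.range K,
    (-1 : ℚ) ^ (s+1) * gchoose (((K+1:ℕ):ℚ) - 1 - ((s+1:ℕ):ℚ)) (((s+1:ℕ):ℤ) - 1) *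
      (∑ r ∈ Finset.range (K+2 - (s+1) + 1),
        (3:ℚ) ^ r * gchoose (((K+1:ℕ):ℚ) - 2 * ((s+1:ℕ):ℚ)) r * gchoose (((s+1:ℕ):ℚ) - 1) (((K+2:ℕ) : ℤ) - (s+1:ℕ) - r)) = 0 := by
  intro s hs
  simp only [Finset.mem_range] at hs
  rcases le_or_gt (2*s+1) K with h2s | h2s
  · have hz : (∑ r ∈ Finset.range (K+2 - (s+1) + 1),
        (3:ℚ) ^ r * gchoose (((K+1:ℕ):ℚ) - 2 * ((s+1:ℕ):ℚ)) r * gchoose (((s+1:ℕ):ℚ) - 1) (((K+2:ℕ) : ℤ) - (s+1:ℕ) - r)) = 0 := by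
      apply Finset.sum_eq_zero
      intro r _
      rcases le_or_gt r (K - 1 - 2*s) with hr | hr
      · have ha : gchoose ((s:ℕ):ℚ) (((K+2:ℕ) : ℤ) - (s+1:ℕ) - r) = 0 :=
          gchoose_nat_zero (by push_cast; omega)
        rw [show (((s+1:ℕ):ℚ) - 1) = ((s:ℕ):ℚ) by push_cast; ring, ha]
        ring
      · have ha : gchoose (((K - 1 - 2*s:ℕ)):ℚ) ((r:ℕ):ℤ) = 0 :=
          gchoose_nat_zero (by push_cast; omega)
        rw [show (((K+1:ℕ):ℚ) - 2 * ((s+1:ℕ):ℚ)) = ((K - 1 - 2*s:ℕ):ℚ) by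
          push_cast [Nat.cast_sub (by omega : 1 ≤ K), Nat.cast_sub (by omega : 2*s ≤ K - 1)]; ring, ha]
        ring
    rw [hz]; ring
  · have ha : gchoose (((K - 1 - s:ℕ)):ℚ) (((s+1:ℕ):ℤ) - 1) = 0 :=
      gchoose_nat_zero (by push_cast; omega)
    rw [show (((K+1:ℕ):ℚ) - 1 - ((s+1:ℕ):ℚ)) = ((K - 1 - s:ℕ):ℚ) by
      push_cast [Nat.cast_sub (by omega : 1 ≤ K), Nat.cast_sub (by omega : s ≤ K - 1)]; ring, ha]
    ring

lemma S1_boundary1 (K : ℕ) :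
    (-1:ℚ) ^ (K + 1) * gchoose (((K + 1:ℕ):ℚ) - 1 - ((K + 1:ℕ):ℚ)) ((K + 1:ℕ):ℤ) *
      ∑ r ∈ Finset.range (K + 2 - (K + 1) + 1),
        (3:ℚ) ^ r * gchoose (((K + 1:ℕ):ℚ) - 1 - 2 * ((K + 1:ℕ):ℚ)) (r:ℤ) *
          gchoose (((K + 1:ℕ):ℚ) + 1) (((K + 2:ℕ):ℤ) - ((K + 1:ℕ):ℤ) - (r:ℤ))
    = -(2*((K:ℚ)+2)) := by
  rw [show K + 2 - (K + 1) + 1 = 2 from by omega]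
  rw [Finset.sum_range_succ, Finset.sum_range_one]
  rw [show (((K + 1:ℕ):ℚ) - 1 - ((K + 1:ℕ):ℚ)) = -1 from by push_cast; ring]
  rw [gchoose_neg_one (K+1)]
  rw [show (((K + 2:ℕ):ℤ) - ((K + 1:ℕ):ℤ) - ((0:ℕ):ℤ)) = 1 from by push_cast; ring]
  rw [show (((K + 2:ℕ):ℤ) - ((K + 1:ℕ):ℤ) - ((1:ℕ):ℤ)) = 0 from by push_cast; ring]
  rw [show (((K + 1:ℕ):ℚ) + 1) = ((K:ℚ)+2) from by push_cast; ring]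
  rw [show (((K + 1:ℕ):ℚ) - 1 - 2 * ((K + 1:ℕ):ℚ)) = -((K:ℚ)+2) from by push_cast; ring]
  rw [show ((0:ℕ):ℤ) = (0:ℤ) from by norm_num, show ((1:ℕ):ℤ) = (1:ℤ) from by norm_num]
  rw [gchoose_zero, gchoose_zero, gchoose_one, gchoose_one]
  rw [show ((-1:ℚ))^(K+1) * ((-1:ℚ))^(K+1) = 1 from by
    rw [← pow_add]; exact Even.neg_one_pow ⟨K+1, by ring⟩]
  ring

lemma S1_boundary2 (K : ℕ) :
    (-1:ℚ) ^ (K + 2) * gchoose (((K + 1:ℕ):ℚ) - 1 - ((K + 2:ℕ):ℚ)) ((K + 2:ℕ):ℤ) *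
      ∑ r ∈ Finset.range (K + 2 - (K + 2) + 1),
        (3:ℚ) ^ r * gchoose (((K + 1:ℕ):ℚ) - 1 - 2 * ((K + 2:ℕ):ℚ)) (r:ℤ) *
          gchoose (((K + 2:ℕ):ℚ) + 1) (((K + 2:ℕ):ℤ) - ((K + 2:ℕ):ℤ) - (r:ℤ))
    = (K:ℚ)+3 := by
  rw [show K + 2 - (K + 2) + 1 = 1 from by omega]
  rw [Finset.sum_range_one]
  rw [show (((K + 1:ℕ):ℚ) - 1 - ((K + 2:ℕ):ℚ)) = -2 from by push_cast; ring]
  rw [gchoose_neg_two (K+2)]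
  rw [show (((K + 2:ℕ):ℤ) - ((K + 2:ℕ):ℤ) - ((0:ℕ):ℤ)) = 0 from by push_cast; ring]
  rw [show ((0:ℕ):ℤ) = (0:ℤ) from by norm_num]
  rw [gchoose_zero, gchoose_zero]
  rw [show ((-1:ℚ))^(K+2) * ((-1:ℚ)^(K+2) * (((K+2:ℕ):ℚ)+1)) = ((K:ℚ)+3) from by
    rw [← mul_assoc, ← pow_add]
    rw [Even.neg_one_pow ⟨K+2, by ring⟩]
    push_cast; ring]
  ring

lemma S2_boundary1 (K : ℕ) :
    (-1:ℚ) ^ (K + 1) * gchoose (((K + 1:ℕ):ℚ) - 1 - ((K + 1:ℕ):ℚ)) (((K + 1:ℕ):ℤ) - 1) *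
      ∑ r ∈ Finset.range (K + 2 - (K + 1) + 1),
        (3:ℚ) ^ r * gchoose (((K + 1:ℕ):ℚ) - 2 * ((K + 1:ℕ):ℚ)) (r:ℤ) *
          gchoose (((K + 1:ℕ):ℚ) - 1) (((K + 2:ℕ):ℤ) - ((K + 1:ℕ):ℤ) - (r:ℤ))
    = 2*(K:ℚ)+3 := by
  rw [show K + 2 - (K + 1) + 1 = 2 from by omega]
  rw [Finset.sum_range_succ, Finset.sum_range_one]
  rw [show (((K + 1:ℕ):ℚ) - 1 - ((K + 1:ℕ):ℚ)) = -1 from by push_cast; ring]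
  rw [show (((K + 1:ℕ):ℤ) - 1) = ((K:ℕ):ℤ) from by push_cast; ring]
  rw [gchoose_neg_one K]
  rw [show (((K + 2:ℕ):ℤ) - ((K + 1:ℕ):ℤ) - ((0:ℕ):ℤ)) = 1 from by push_cast; ring]
  rw [show (((K + 2:ℕ):ℤ) - ((K + 1:ℕ):ℤ) - ((1:ℕ):ℤ)) = 0 from by push_cast; ring]
  rw [show ((1:ℕ):ℤ) = (1:ℤ) from by norm_num, show ((0:ℕ):ℤ) = (0:ℤ) from by norm_num]
  rw [gchoose_zero, gchoose_zero, gchoose_one, gchoose_one]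
  rw [show ((-1:ℚ))^(K+1) * ((-1:ℚ))^K = -1 from by
    rw [← pow_add]
    exact Odd.neg_one_pow ⟨K, by ring⟩]
  push_cast; ring

lemma S2_boundary2 (K : ℕ) :
    (-1:ℚ) ^ (K + 2) * gchoose (((K + 1:ℕ):ℚ) - 1 - ((K + 2:ℕ):ℚ)) (((K + 2:ℕ):ℤ) - 1) *
      ∑ r ∈ Finset.range (K + 2 - (K + 2) + 1),
        (3:ℚ) ^ r * gchoose (((K + 1:ℕ):ℚ) - 2 * ((K + 2:ℕ):ℚ)) (r:ℤ) *
          gchoose (((K + 2:ℕ):ℚ) - 1) (((K + 2:ℕ):ℤ) - ((K + 2:ℕ):ℤ) - (r:ℤ))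
    = -((K:ℚ)+2) := by
  rw [show K + 2 - (K + 2) + 1 = 1 from by omega]
  rw [Finset.sum_range_one]
  rw [show (((K + 1:ℕ):ℚ) - 1 - ((K + 2:ℕ):ℚ)) = -2 from by push_cast; ring]
  rw [show (((K + 2:ℕ):ℤ) - 1) = ((K+1:ℕ):ℤ) from by push_cast; ring]
  rw [gchoose_neg_two (K+1)]
  rw [show (((K + 2:ℕ):ℤ) - ((K + 2:ℕ):ℤ) - ((0:ℕ):ℤ)) = 0 from by push_cast; ring]
  rw [show ((0:ℕ):ℤ) = (0:ℤ) from by norm_num]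
  rw [gchoose_zero, gchoose_zero]
  rw [show ((-1:ℚ))^(K+2) * ((-1:ℚ)^(K+1) * (((K+1:ℕ):ℚ)+1)) = -(((K:ℚ))+2) from by
    rw [← mul_assoc, ← pow_add]
    rw [Odd.neg_one_pow ⟨K+1, by ring⟩]
    push_cast; ring]
  ring

lemma aF_vanish (K : ℕ) : aF (K+2) ((K+1:ℕ):ℚ) = 0 := by
  unfold aF
  rw [Finset.sum_range_succ, Finset.sum_range_succ]
  rw [Finset.sum_eq_zero (S1_vanish_main K)]
  rw [show Finset.Icc 1 (K+2) = Finset.Icc 1 ((K+1)+1) from rfl, sum_Icc_one]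
  rw [S1_boundary1 K, S1_boundary2 K]
  rw [Finset.sum_range_succ, Finset.sum_range_succ]
  rw [Finset.sum_eq_zero (S2_vanish_main K)]
  rw [S2_boundary1 K, S2_boundary2 K]
  ring

lemma composition_zero_blocks (c : Composition 0) : c.blocks = [] := by
  have h := c.blocks_sum
  cases hb : c.blocks with
  | nil => rfl
  | cons a t =>
    have ha := c.blocks_pos (by rw [hb]; exact List.mem_cons_self)
    rw [hb] at h
    simp only [List.sum_cons] at h
    omega

lemma tFq_zero : tFq 0 = 1 := by
  unfold tFq
  have h : ∀ c : Composition 0,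
      ((c.blocks.map (fun (ℓ : ℕ) =>
        (-1 : Polynomial ℚ) ^ (ℓ - 1) * (Polynomial.X - Polynomial.C (ℓ : ℚ)))).prod) = 1 := by
    intro c
    rw [composition_zero_blocks c]
    simp
  rw [Finset.sum_congr rfl (fun c _ => h c), Finset.sum_const, Finset.card_univ, composition_card]
  norm_num

def compCons (n : ℕ) (x : Σ ℓ : Fin (n+1), Composition (n - ℓ.1)) : Composition (n+1) where
  blocks := (x.1.1 + 1) :: x.2.blocks
  blocks_pos := by
    intro i hi
    rcases List.mem_cons.mp hi with h | h
    · omega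
    · exact x.2.blocks_pos h
  blocks_sum := by
    have h2 := x.2.blocks_sum
    have h1 := x.1.2
    simp only [List.sum_cons, h2]
    omega

lemma compCons_bijective (n : ℕ) : Function.Bijective (compCons n) := by
  constructor
  · rintro ⟨⟨l1, h1⟩, c1⟩ ⟨⟨l2, h2⟩, c2⟩ h
    have hb := congrArg Composition.blocks h
    simp only [compCons, List.cons.injEq] at hb
    obtain ⟨he, ht⟩ := hb
    have hl : l1 = l2 := by omega
    subst hl
    have hc : c1 = c2 := by
      ext1
      exact ht
    subst hc
    rfl
  · intro c
    have hsum := c.blocks_sum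
    cases hb : c.blocks with
    | nil => rw [hb] at hsum; simp at hsum
    | cons a t =>
      rw [hb] at hsum
      simp only [List.sum_cons] at hsum
      have ha : 0 < a := c.blocks_pos (by rw [hb]; exact List.mem_cons_self)
      refine ⟨⟨⟨a - 1, by omega⟩, ⟨t, ?_, ?_⟩⟩, ?_⟩
      · intro i hi
        exact c.blocks_pos (by rw [hb]; exact List.mem_cons_of_mem a hi)
      · show t.sum = n - (a - 1)
        omega
      · apply Composition.ext
        simp only [compCons, hb]
        congr 1
        omega

lemma tFq_succ (n : ℕ) : tFq (n+1)
    = ∑ ℓ ∈ Finset.range (n+1),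
        ((-1 : Polynomial ℚ)^ℓ * (Polynomial.X - Polynomial.C ((ℓ+1:ℕ):ℚ))) * tFq (n - ℓ) := by
  rw [show tFq (n+1) = ∑ c : Composition (n+1),
    ((c.blocks.map (fun (ℓ : ℕ) =>
      (-1 : Polynomial ℚ) ^ (ℓ - 1) * (Polynomial.X - Polynomial.C (ℓ : ℚ)))).prod) from rfl]
  rw [← Fintype.sum_bijective (compCons n) (compCons_bijective n) _ _ (fun x => rfl)]
  rw [← Finset.univ_sigma_univ, Finset.sum_sigma]
  rw [← Fin.sum_univ_eq_sum_range]
  apply Finset.sum_congr rfl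
  intro ℓ _
  have hterm : ∀ c : Composition (n - ℓ.1),
      (((compCons n ⟨ℓ, c⟩).blocks.map (fun (j : ℕ) =>
        (-1 : Polynomial ℚ) ^ (j - 1) * (Polynomial.X - Polynomial.C (j : ℚ)))).prod)
      = ((-1 : Polynomial ℚ)^ℓ.1 * (Polynomial.X - Polynomial.C ((ℓ.1+1:ℕ):ℚ))) *
        ((c.blocks.map (fun (j : ℕ) =>
          (-1 : Polynomial ℚ) ^ (j - 1) * (Polynomial.X - Polynomial.C (j : ℚ)))).prod) := by
    intro c
    simp only [compCons, List.map_cons, List.prod_cons]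
    congr 2
  rw [Finset.sum_congr rfl (fun c _ => hterm c), ← Finset.mul_sum]
  rfl

noncomputable def Etf (n : ℕ) : Polynomial ℚ :=
  ∑ ℓ ∈ Finset.range n, (-1 : Polynomial ℚ)^ℓ * tFq (n - 1 - ℓ)

lemma Etf_succ (n : ℕ) : Etf (n+1) = tFq n - Etf n := by
  unfold Etf
  rw [Finset.sum_range_succ']
  have h0 : ((-1 : Polynomial ℚ))^(0:ℕ) * tFq (n + 1 - 1 - 0) = tFq n := by
    norm_num
  rw [h0]
  have hterm : ∀ i ∈ Finset.range n,
      ((-1 : Polynomial ℚ))^(i+1) * tFq (n + 1 - 1 - (i+1))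
      = -(((-1 : Polynomial ℚ))^i * tFq (n - 1 - i)) := by
    intro i _
    rw [show n + 1 - 1 - (i+1) = n - 1 - i from by omega, pow_succ]
    ring
  rw [Finset.sum_congr rfl hterm, Finset.sum_neg_distrib]
  ring

lemma tFq_step1 (n : ℕ) :
    tFq (n+2) = (Polynomial.X - Polynomial.C 2) * tFq (n+1) + Etf (n+1) := by
  rw [tFq_succ (n+1), Finset.sum_range_succ']
  have h0 : ((-1 : Polynomial ℚ)^(0:ℕ) * (Polynomial.X - Polynomial.C ((0+1:ℕ):ℚ))) * tFq (n + 1 - 0)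
      = (Polynomial.X - Polynomial.C 1) * tFq (n+1) := by
    norm_num
  rw [h0]
  have hterm : ∀ i ∈ Finset.range (n+1),
      ((-1 : Polynomial ℚ)^(i+1) * (Polynomial.X - Polynomial.C ((i+1+1:ℕ):ℚ))) * tFq (n + 1 - (i+1))
      = -(((-1 : Polynomial ℚ)^i * (Polynomial.X - Polynomial.C ((i+1:ℕ):ℚ))) * tFq (n - i))
        + ((-1 : Polynomial ℚ))^i * tFq (n - i) := by
    intro i _
    rw [show n + 1 - (i+1) = n - i from by omega, pow_succ]
    rw [show ((i+1+1:ℕ):ℚ) = ((i+1:ℕ):ℚ) + 1 from by push_cast; ring]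
    rw [map_add, Polynomial.C_1]
    ring
  rw [Finset.sum_congr rfl hterm, Finset.sum_add_distrib, Finset.sum_neg_distrib]
  rw [← tFq_succ n]
  have hE : ∑ i ∈ Finset.range (n+1), ((-1 : Polynomial ℚ))^i * tFq (n - i) = Etf (n+1) := by
    unfold Etf
    apply Finset.sum_congr rfl
    intro i _
    rw [show n + 1 - 1 - i = n - i from by omega]
  rw [hE]
  have h2 : Polynomial.C (2:ℚ) = Polynomial.C 1 + 1 := by
    rw [show (2:ℚ) = 1 + 1 from by norm_num, map_add, map_one]
  rw [h2]
  ring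

lemma tFq_two_rec (n : ℕ) :
    tFq (n+3) = (Polynomial.X - Polynomial.C 3) * tFq (n+2)
      + (Polynomial.X - Polynomial.C 1) * tFq (n+1) := by
  have h1 := tFq_step1 (n+1)
  have h2 := Etf_succ (n+1)
  have h3 := tFq_step1 n
  have hC : Polynomial.C (3:ℚ) = Polynomial.C 2 + 1 := by
    rw [show (3:ℚ) = 2 + 1 from by norm_num, map_add, map_one]
  rw [hC]
  rw [show n+1+1 = n+2 from by omega] at h1 h2
  rw [show n+1+2 = n+3 from by omega] at h1
  have hC2 : Polynomial.C (2:ℚ) = Polynomial.C 1 + 1 := by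
    rw [show (2:ℚ) = 1 + 1 from by norm_num, map_add, Polynomial.C_1]
  rw [hC2] at h1 h3 ⊢
  linear_combination h1 + h2 + h3

noncomputable def Ppoly (m : ℕ) : Polynomial ℚ :=
  ∑ k ∈ Finset.range (m + 1),
    Polynomial.C ((-1 : ℚ) ^ k * aF k (m : ℚ)) * Polynomial.X ^ (m - k)

lemma Ppoly_reflect (m : ℕ) : Ppoly m
    = ∑ j ∈ Finset.range (m+1),
      Polynomial.C ((-1:ℚ)^(m+j) * aF (m-j) (m:ℚ)) * Polynomial.X ^ j := by
  unfold Ppoly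
  rw [← Finset.sum_range_reflect]
  apply Finset.sum_congr rfl
  intro j hj
  simp only [Finset.mem_range] at hj
  rw [show m+1-1-j = m - j from by omega]
  rw [show m - (m - j) = j from by omega]
  rw [show (-1:ℚ)^(m-j) = (-1)^(m+j) from by
    rw [show m+j = (m-j) + 2*j from by omega, pow_add, pow_mul]; norm_num]

lemma coeff_sum_CX (m : ℕ) (a : ℕ → ℚ) (i : ℕ) :
    (∑ j ∈ Finset.range (m+1), Polynomial.C (a j) * Polynomial.X ^ j).coeff i
      = if i ≤ m then a i else 0 := by
  rw [Polynomial.finset_sum_coeff]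
  have h : ∀ j ∈ Finset.range (m+1), (Polynomial.C (a j) * Polynomial.X ^ j).coeff i
      = if j = i then a j else 0 := by
    intro j _
    rw [Polynomial.coeff_C_mul, Polynomial.coeff_X_pow]
    by_cases hji : j = i
    · rw [if_pos hji.symm, if_pos hji, mul_one]
    · rw [if_neg (fun hh => hji hh.symm), if_neg hji, mul_zero]
  rw [Finset.sum_congr rfl h, Finset.sum_ite_eq' (Finset.range (m+1)) i a]
  simp [Nat.lt_succ_iff]

lemma coeff_Ppoly (m i : ℕ) :
    (Ppoly m).coeff i = (-1:ℚ)^(m+i) * AZ ((m:ℤ) - i) (m:ℚ) := by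
  rw [Ppoly_reflect, coeff_sum_CX m (fun j => (-1:ℚ)^(m+j) * aF (m-j) (m:ℚ)) i]
  by_cases h : i ≤ m
  · rw [if_pos h, aF_eq_AZ]
    rw [show (((m-i:ℕ)):ℤ) = (m:ℤ) - i from by omega]
  · rw [if_neg h, AZ_neg (show (m:ℤ) - i < 0 from by
      have : m < i := by omega
      omega), mul_zero]

lemma Ppoly_rec (m : ℕ) :
    Ppoly (m+3) = (Polynomial.X - Polynomial.C 3) * Ppoly (m+2)
      + (Polynomial.X - Polynomial.C 1) * Ppoly (m+1) := by
  have v1 : AZ ((m+3:ℕ):ℤ) ((m+2:ℕ):ℚ) = 0 := by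
    rw [← aF_eq_AZ]
    have := aF_vanish (m+1)
    rw [show m+1+2 = m+3 from by omega, show m+1+1 = m+2 from by omega] at this
    exact this
  have v2 : AZ ((m+2:ℕ):ℤ) ((m+1:ℕ):ℚ) = 0 := by
    rw [← aF_eq_AZ]
    exact aF_vanish m
  ext i
  rw [Polynomial.coeff_add, sub_mul, sub_mul, Polynomial.coeff_sub, Polynomial.coeff_sub,
      Polynomial.coeff_C_mul, Polynomial.coeff_C_mul]
  cases i with
  | zero =>
    rw [Polynomial.mul_coeff_zero, Polynomial.mul_coeff_zero, Polynomial.coeff_X_zero]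
    rw [coeff_Ppoly, coeff_Ppoly, coeff_Ppoly]
    simp only [Nat.cast_zero, sub_zero, Nat.add_zero, add_zero]
    have h := AZ_rec ((m+3:ℕ):ℤ) ((m+3:ℕ):ℚ)
    rw [show ((m+3:ℕ):ℤ) - 1 = ((m+2:ℕ):ℤ) from by push_cast; ring,
        show ((m+3:ℕ):ℤ) - 2 = ((m+1:ℕ):ℤ) from by push_cast; ring,
        show ((m+3:ℕ):ℚ) - 1 = ((m+2:ℕ):ℚ) from by push_cast; ring,
        show ((m+3:ℕ):ℚ) - 2 = ((m+1:ℕ):ℚ) from by push_cast; ring] at h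
    rw [v1, v2] at h
    linear_combination ((-1:ℚ)^(m+3)) * h
  | succ j =>
    rw [Polynomial.coeff_X_mul, Polynomial.coeff_X_mul]
    rw [coeff_Ppoly, coeff_Ppoly, coeff_Ppoly, coeff_Ppoly, coeff_Ppoly]
    have h := AZ_rec (((m+2:ℕ):ℤ) - (j:ℤ)) ((m+3:ℕ):ℚ)
    rw [show ((m+3:ℕ):ℚ) - 1 = ((m+2:ℕ):ℚ) from by push_cast; ring,
        show ((m+3:ℕ):ℚ) - 2 = ((m+1:ℕ):ℚ) from by push_cast; ring] at h
    rw [show ((m+3:ℕ):ℤ) - ((j+1:ℕ):ℤ) = ((m+2:ℕ):ℤ) - (j:ℤ) from by push_cast; ring,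
        show ((m+2:ℕ):ℤ) - ((j+1:ℕ):ℤ) = ((m+2:ℕ):ℤ) - (j:ℤ) - 1 from by push_cast; ring,
        show ((m+1:ℕ):ℤ) - ((j:ℕ):ℤ) = ((m+2:ℕ):ℤ) - (j:ℤ) - 1 from by push_cast; ring,
        show ((m+1:ℕ):ℤ) - ((j+1:ℕ):ℤ) = ((m+2:ℕ):ℤ) - (j:ℤ) - 2 from by push_cast; ring]
    rw [show m+3+(j+1) = m+j+4 from by omega, show m+2+(j+1) = m+j+3 from by omega,
        show m+2+j = m+j+2 from by omega, show m+1+(j+1) = m+j+2 from by omega,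
        show m+1+j = m+j+1 from by omega]
    linear_combination ((-1:ℚ)^(m+j+4)) * h

lemma gchoose_two (x : ℚ) : gchoose x 2 = x*(x-1)/2 := by
  rw [show (2:ℤ) = ((2:ℕ):ℤ) from by norm_num, gchoose_coe]
  rw [show ffall x 2 = x * (x-1) from by
    rw [show (2:ℕ) = 1+1 from rfl, ffall_succ, show (1:ℕ) = 0+1 from rfl, ffall_succ]
    simp [ffall]]
  norm_num

lemma Ucn_two (x : ℚ) : Ucn 2 x = 2*x^2 - 3*x - 1 := by
  have hn1 : ∀ y : ℚ, gchoose y (-1) = 0 := fun y => gchoose_neg (by norm_num)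
  have hn2 : ∀ y : ℚ, gchoose y (-2) = 0 := fun y => gchoose_neg (by norm_num)
  norm_num [Ucn, Inn, Finset.sum_range_succ, gchoose_zero, gchoose_one, gchoose_two, hn1, hn2]
  ring

lemma aF_zero_eval (x : ℚ) : aF 0 x = 1 := by
  unfold aF
  norm_num [Finset.sum_range_one, gchoose_zero, gchoose_one]

lemma aF_one_eval (x : ℚ) : aF 1 x = 2*x - 1 := by
  rw [aF_eq_AZ]
  unfold AZ
  rw [Uc_ofNat 1 x, Ucn_one]
  rw [show ((1:ℕ):ℤ) - 1 = ((0:ℕ):ℤ) from by norm_num]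
  rw [Uc_ofNat 0, Uc_ofNat 0, Ucn_zero, Ucn_zero]
  ring

lemma aF_two_eval (x : ℚ) : aF 2 x = 2*x^2 - 3*x + 1 := by
  rw [aF_eq_AZ]
  unfold AZ
  rw [Uc_ofNat 2 x, Ucn_two]
  rw [show ((2:ℕ):ℤ) - 1 = ((1:ℕ):ℤ) from by norm_num]
  rw [Uc_ofNat 1, Uc_ofNat 1, Ucn_one, Ucn_one]
  ring

lemma tFq_one : tFq 1 = Polynomial.X - Polynomial.C 1 := by
  rw [show (1:ℕ) = 0+1 from rfl, tFq_succ 0, Finset.sum_range_one, tFq_zero]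
  norm_num

lemma base1 : tFq 1 = Ppoly 1 := by
  rw [tFq_one]
  unfold Ppoly
  rw [Finset.sum_range_succ, Finset.sum_range_one, aF_zero_eval, aF_one_eval]
  norm_num
  ring

lemma base2 : tFq 2 = Ppoly 2 := by
  have h2 : tFq 2 = (Polynomial.X - Polynomial.C 1) * (Polynomial.X - Polynomial.C 1)
      - (Polynomial.X - Polynomial.C 2) := by
    rw [show (2:ℕ) = 1+1 from rfl, tFq_succ 1, Finset.sum_range_succ, Finset.sum_range_one,
        tFq_zero, tFq_one]
    norm_num [map_ofNat]
    ring
  rw [h2]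
  unfold Ppoly
  rw [Finset.sum_range_succ, Finset.sum_range_succ, Finset.sum_range_one,
      aF_zero_eval, aF_one_eval, aF_two_eval]
  norm_num [map_ofNat]
  ring


/-- For every `m ≥ 1`, `t_F(m) = ∑_{k=0}^{m} (-1)^k a^F_k(m) q^{m-k}` in `ℚ[q]`. -/
theorem tFq_coefficients (m : ℕ) (hm : 1 ≤ m) :
    tFq m = ∑ k ∈ Finset.range (m + 1),
      Polynomial.C ((-1 : ℚ) ^ k * aF k (m : ℚ)) * Polynomial.X ^ (m - k) := by
  show tFq m = Ppoly m
  have key : ∀ n : ℕ, tFq (n+1) = Ppoly (n+1) ∧ tFq (n+2) = Ppoly (n+2) := by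
    intro n
    induction n with
    | zero => exact ⟨base1, base2⟩
    | succ p ih =>
      refine ⟨ih.2, ?_⟩
      rw [show p+1+2 = p+3 from by omega, tFq_two_rec p, Ppoly_rec p, ih.1, ih.2]
  obtain ⟨n, rfl⟩ : ∃ n, m = n+1 := ⟨m-1, by omega⟩
  exact (key n).1
end

section
/- Let R be a commutative ring and q, v, v' ∈ R. For m ≥ 1 let t_F(m) = Σ over all compositions (ℓ₁,…,ℓ_k) of m into positive integer parts of ∏_{j=1}^{k} v^{ℓ_j−1}·(q+ℓ_j·v'), and define t_P(m) = Σ_{k=1}^{m−1} k·v^{k−1}·(q+k·v')·t_F(m−k) + v^{m−1}·(v+m)·(q+m·v'). Let Ψ(z) = Σ_{ℓ≥1} v^{ℓ−1}·(q+ℓ·v')·z^ℓ ∈ R[[z]] and let Ψ′ denote its formal derivative. Then, in R[[z]], (1 − Ψ(z)) · Σ_{m≥1} t_P(m)·z^m = z·Ψ′(z) + v·Ψ(z)·(1 − Ψ(z)). -/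
/-- Partition function of the one-dimensional `m`-site polymer gas (free
boundary conditions): each site covered by exactly one polymer, a polymer of
length `ℓ` having fugacity `v^(ℓ-1) (q + ℓ v')`. -/
noncomputable def tF {R : Type*} [CommRing R] (q v v' : R) (m : ℕ) : R :=
  ∑ c : Composition m, (c.blocks.map (fun (ℓ : ℕ) =>
    v ^ (ℓ - 1) * (q + (ℓ : R) * v'))).prod

/-- Partition function of the polymer gas on the `m`-cycle (cylindrical
boundary conditions):
`t_P(m) = ∑_{k=1}^{m-1} k v^(k-1) (q + k v') t_F(m-k) + v^(m-1) (v+m) (q + m v')`. -/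
noncomputable def tP {R : Type*} [CommRing R] (q v v' : R) (m : ℕ) : R :=
  (∑ k ∈ Finset.Icc 1 (m - 1), (k : R) * v ^ (k - 1) * (q + (k : R) * v') * tF q v v' (m - k))
    + v ^ (m - 1) * (v + (m : R)) * (q + (m : R) * v')

def psi {R : Type*} [CommRing R] (q v v' : R) (n : ℕ) : R :=
  v ^ (n - 1) * (q + (n : R) * v')

lemma tF_zero {R : Type*} [CommRing R] (q v v' : R) : tF q v v' 0 = 1 := by
  have h : ∀ c : Composition 0, c.blocks = [] := by
    intro c
    rcases hb : c.blocks with _ | ⟨a, t⟩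
    · rfl
    · exfalso
      have := c.blocks_pos (hb ▸ (List.mem_cons_self : a ∈ a :: t))
      have hs := c.blocks_sum
      rw [hb] at hs
      simp at hs
      omega
  have h1 : (Finset.univ : Finset (Composition 0)) = {⟨[], by simp, by simp⟩} := by
    apply Finset.eq_singleton_iff_unique_mem.2
    refine ⟨Finset.mem_univ _, fun c _ => ?_⟩
    exact Composition.ext (h c)
  rw [tF, h1]
  simp

lemma sigma_comp_eq {m : ℕ} {k k' : ℕ} (c : Composition (m - k)) (c' : Composition (m - k'))
    (hk : k = k') (h : c.blocks = c'.blocks) :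
    (⟨k, c⟩ : Σ n : ℕ, Composition (m - n)) = ⟨k', c'⟩ := by
  subst hk
  exact congrArg _ (Composition.ext h)

lemma blocks_decomp {m : ℕ} (c : Composition (m + 1)) :
    c.blocks = c.blocks.headI :: c.blocks.tail ∧ 1 ≤ c.blocks.headI ∧
      c.blocks.headI + c.blocks.tail.sum = m + 1 := by
  rcases hb : c.blocks with _ | ⟨a, t⟩
  · exfalso
    have := c.blocks_sum
    rw [hb] at this
    simp at this
  · have hpos := c.blocks_pos (hb ▸ (List.mem_cons_self : a ∈ a :: t))
    have hs := c.blocks_sum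
    rw [hb] at hs
    exact ⟨by simp, by simp only [List.headI]; omega, by simp only [List.headI, List.tail_cons, List.sum_cons]; simpa using hs⟩

def fwdC {m : ℕ} (c : Composition (m + 1)) : Σ k : ℕ, Composition (m - k) :=
  ⟨c.blocks.headI - 1, c.blocks.tail,
    fun hi => c.blocks_pos (List.mem_of_mem_tail hi),
    by have h := blocks_decomp c; omega⟩

def bwdC {m : ℕ} (p : Σ k : ℕ, Composition (m - k)) (hk : p.1 < m + 1) : Composition (m + 1) :=
  ⟨(p.1 + 1) :: p.2.blocks,
    by intro i hi
       rcases List.mem_cons.1 hi with h | h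
       · omega
       · exact p.2.blocks_pos h,
    by simp only [List.sum_cons, p.2.blocks_sum]; omega⟩

lemma tF_succ {R : Type*} [CommRing R] (q v v' : R) (m : ℕ) :
    tF q v v' (m + 1) = ∑ k ∈ Finset.range (m + 1), psi q v v' (k + 1) * tF q v v' (m - k) := by
  rw [tF]
  have h1 : ∀ k ∈ Finset.range (m+1), psi q v v' (k+1) * tF q v v' (m-k)
      = ∑ c : Composition (m - k), psi q v v' (k+1) *
          (c.blocks.map (fun (ℓ : ℕ) => v ^ (ℓ - 1) * (q + (ℓ : R) * v'))).prod := by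
    intro k _
    rw [tF, Finset.mul_sum]
  rw [Finset.sum_congr rfl h1,
    ← Finset.sum_sigma (Finset.range (m+1)) (fun k => (Finset.univ : Finset (Composition (m-k))))
      (fun p => psi q v v' (p.1+1) * (p.2.blocks.map (fun (ℓ : ℕ) => v ^ (ℓ - 1) * (q + (ℓ : R) * v'))).prod)]
  refine Finset.sum_bij' (fun c _ => fwdC c)
    (fun p hp => bwdC p (by simpa using (Finset.mem_sigma.1 hp).1)) ?_ ?_ ?_ ?_ ?_
  · intro c _
    have h := blocks_decomp c
    refine Finset.mem_sigma.2 ⟨?_, Finset.mem_univ _⟩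
    simp only [fwdC, Finset.mem_range]
    omega
  · intro p hp
    exact Finset.mem_univ _
  · intro c _
    have h := blocks_decomp c
    apply Composition.ext
    simp only [bwdC, fwdC]
    rw [show c.blocks.headI - 1 + 1 = c.blocks.headI by omega]
    exact h.1.symm
  · intro p hp
    apply sigma_comp_eq
    · simp [fwdC, bwdC]
    · simp [fwdC, bwdC]
  · intro c _
    have h := blocks_decomp c
    conv_lhs => rw [h.1]
    simp only [fwdC, List.map_cons, List.prod_cons, psi]
    rw [show c.blocks.headI - 1 + 1 = c.blocks.headI by omega]


lemma sum_Icc_one_s7 {M : Type*} [AddCommMonoid M] (f : ℕ → M) (m : ℕ) :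
    ∑ k ∈ Finset.Icc 1 m, f k = ∑ i ∈ Finset.range m, f (i + 1) := by
  induction m with
  | zero => simp
  | succ m ih =>
      rw [Finset.sum_Icc_succ_top (by omega), ih, Finset.sum_range_succ]

lemma key_A {R : Type*} [CommRing R] (q v v' : R) :
    (1 - PowerSeries.mk (fun (ℓ : ℕ) => if ℓ = 0 then 0 else v ^ (ℓ - 1) * (q + (ℓ : R) * v')))
      * PowerSeries.mk (fun m => if m = 0 then 0 else tF q v v' m)
    = PowerSeries.mk (fun (ℓ : ℕ) => if ℓ = 0 then 0 else v ^ (ℓ - 1) * (q + (ℓ : R) * v')) := by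
  ext n
  rw [sub_mul, one_mul, map_sub]
  cases n with
  | zero => simp [PowerSeries.coeff_zero_eq_constantCoeff, map_mul]
  | succ m =>
      rw [PowerSeries.coeff_mul, Finset.Nat.sum_antidiagonal_eq_sum_range_succ_mk,
        Finset.sum_range_succ', Finset.sum_range_succ]
      simp only [PowerSeries.coeff_mk, if_true, Nat.succ_ne_zero, if_false, Nat.sub_self,
        reduceIte, mul_zero, zero_mul, add_zero, zero_add]
      have hc : ∀ i ∈ Finset.range m,
          v ^ (i + 1 - 1) * (q + ((i+1 : ℕ) : R) * v') *
            (if m + 1 - (i + 1) = 0 then 0 else tF q v v' (m + 1 - (i + 1)))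
          = psi q v v' (i + 1) * tF q v v' (m - i) := by
        intro i hi
        have hi' : i < m := Finset.mem_range.1 hi
        rw [if_neg (by omega : ¬ m + 1 - (i+1) = 0), show m + 1 - (i+1) = m - i by omega]
        rfl
      rw [Finset.sum_congr rfl hc]
      rw [tF_succ, Finset.sum_range_succ, Nat.sub_self, tF_zero]
      simp [psi]

lemma coeff_derivativeFun_port {R : Type*} [CommRing R] (f : PowerSeries R) (n : ℕ) :
    PowerSeries.coeff n (PowerSeries.derivativeFun f) = PowerSeries.coeff (n + 1) f * (n + 1) :=
  PowerSeries.coeff_derivative f n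

lemma key_B {R : Type*} [CommRing R] (q v v' : R) :
    PowerSeries.mk (fun m => if m = 0 then 0 else tP q v v' m)
    = PowerSeries.X * PowerSeries.derivativeFun
        (PowerSeries.mk (fun (ℓ : ℕ) => if ℓ = 0 then 0 else v ^ (ℓ - 1) * (q + (ℓ : R) * v')))
        * PowerSeries.mk (fun m => if m = 0 then 0 else tF q v v' m)
      + PowerSeries.C v
        * PowerSeries.mk (fun (ℓ : ℕ) => if ℓ = 0 then 0 else v ^ (ℓ - 1) * (q + (ℓ : R) * v'))
      + PowerSeries.X * PowerSeries.derivativeFun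
        (PowerSeries.mk (fun (ℓ : ℕ) => if ℓ = 0 then 0 else v ^ (ℓ - 1) * (q + (ℓ : R) * v'))) := by
  ext n
  cases n with
  | zero => simp [PowerSeries.coeff_zero_eq_constantCoeff, map_mul, mul_assoc]
  | succ m =>
      rw [map_add, map_add, mul_assoc, PowerSeries.coeff_succ_X_mul,
        PowerSeries.coeff_succ_X_mul, PowerSeries.coeff_mul,
        Finset.Nat.sum_antidiagonal_eq_sum_range_succ_mk, Finset.sum_range_succ]
      simp only [PowerSeries.coeff_mk, coeff_derivativeFun_port,
        PowerSeries.coeff_C_mul, PowerSeries.coeff_mk]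
      rw [if_neg (Nat.succ_ne_zero m), if_neg (Nat.succ_ne_zero m),
        show m - m = 0 by omega, if_pos rfl]
      have hc : ∀ k ∈ Finset.range m,
          (if k + 1 = 0 then (0:R) else v ^ (k + 1 - 1) * (q + ((k+1 : ℕ) : R) * v')) * ((k:R) + 1) *
            (if m - k = 0 then 0 else tF q v v' (m - k))
          = ((k+1 : ℕ) : R) * v ^ k * (q + ((k+1 : ℕ) : R) * v') * tF q v v' (m - k) := by
        intro k hk
        have hk' : k < m := Finset.mem_range.1 hk
        rw [if_neg (Nat.succ_ne_zero k), if_neg (by omega)]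
        push_cast
        ring
      rw [Finset.sum_congr rfl hc, tP, sum_Icc_one_s7 (f := fun k =>
        (k : R) * v ^ (k - 1) * (q + (k : R) * v') * tF q v v' (m + 1 - k)) ]
      simp only [Nat.add_sub_cancel]
      have hc2 : ∀ i ∈ Finset.range m,
          ((i+1 : ℕ) : R) * v ^ i * (q + ((i+1 : ℕ) : R) * v') * tF q v v' (m + 1 - (i+1))
          = ((i+1 : ℕ) : R) * v ^ i * (q + ((i+1 : ℕ) : R) * v') * tF q v v' (m - i) := by
        intro i hi
        rw [show m + 1 - (i+1) = m - i by omega]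
      rw [Finset.sum_congr rfl hc2]
      push_cast
      ring

/-- With `Ψ(z) = ∑_{ℓ ≥ 1} v^(ℓ-1) (q + ℓ v') z^ℓ` and `Ψ'` its formal
derivative, the generating function `Φ_P(z) = ∑_{m ≥ 1} t_P(m) z^m` satisfies
`(1 - Ψ) Φ_P = z Ψ' + v Ψ (1 - Ψ)` in `R⟦z⟧`. -/
theorem tP_generating_function {R : Type*} [CommRing R] (q v v' : R) :
    (1 - PowerSeries.mk (fun (ℓ : ℕ) => if ℓ = 0 then 0 else v ^ (ℓ - 1) * (q + (ℓ : R) * v')))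
      * PowerSeries.mk (fun m => if m = 0 then 0 else tP q v v' m)
    = PowerSeries.X * PowerSeries.derivativeFun
        (PowerSeries.mk (fun (ℓ : ℕ) => if ℓ = 0 then 0 else v ^ (ℓ - 1) * (q + (ℓ : R) * v')))
      + PowerSeries.C v
        * PowerSeries.mk (fun (ℓ : ℕ) => if ℓ = 0 then 0 else v ^ (ℓ - 1) * (q + (ℓ : R) * v'))
        * (1 - PowerSeries.mk (fun (ℓ : ℕ) => if ℓ = 0 then 0 else v ^ (ℓ - 1) * (q + (ℓ : R) * v'))) := by
  rw [key_B q v v']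
  linear_combination (PowerSeries.X * PowerSeries.derivativeFun
    (PowerSeries.mk (fun (ℓ : ℕ) => if ℓ = 0 then 0 else v ^ (ℓ - 1) * (q + (ℓ : R) * v'))))
    * key_A q v v'
end

section
/- For every integer k ≥ 0, the function x ↦ ã^P_k(x) from ℚ to ℚ is a polynomial function: there exists a (unique) polynomial P_k ∈ ℚ[x] with P_k(x) = ã^P_k(x) for all x ∈ ℚ; P_k has degree exactly k with leading coefficient 2^k/k!, and its constant coefficient equals 1 if k = 0 and 0 if k ≥ 1. -/
/-- The function `ã^P_k(x)`. -/
def aP (k : ℕ) (x : ℚ) : ℚ :=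
  3 ^ k * gchoose x k
  + ∑ p ∈ Finset.Icc 1 k, (-1 : ℚ) ^ p * (x / p) * gchoose (x - p - 1) ((p : ℤ) - 1) *
    ∑ r ∈ Finset.range (k - p + 1),
      3 ^ r * gchoose (x - 2 * p) r * gchoose (p : ℚ) ((k : ℤ) - p - r)

open Polynomial Finset

noncomputable def fprod (a : ℚ) (n : ℕ) : Polynomial ℚ :=
  ∏ i ∈ range n, (X - Polynomial.C (a + i))

lemma fprod_monic (a : ℚ) (n : ℕ) : (fprod a n).Monic :=
  monic_prod_of_monic _ _ fun i _ => monic_X_sub_C _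

lemma fprod_natDegree (a : ℚ) (n : ℕ) : (fprod a n).natDegree = n := by
  rw [fprod, natDegree_prod_of_monic _ _ fun i _ => monic_X_sub_C _]
  simp only [natDegree_X_sub_C]
  simp

lemma fprod_eval (a : ℚ) (n : ℕ) (x : ℚ) : (fprod a n).eval x = ffall (x - a) n := by
  simp only [fprod, ffall, eval_prod, eval_sub, eval_X, eval_C]
  exact Finset.prod_congr rfl fun i _ => by ring

lemma gchoose_natCast (x : ℚ) (n : ℕ) : gchoose x n = ffall x n / n.factorial := by
  simp [gchoose]

lemma gchoose_sub_one (x : ℚ) (p : ℕ) (hp : 1 ≤ p) :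
    gchoose x ((p : ℤ) - 1) = ffall x (p - 1) / (p - 1).factorial := by
  have h0 : (0 : ℤ) ≤ (p : ℤ) - 1 := by omega
  have h1 : ((p : ℤ) - 1).toNat = p - 1 := by omega
  simp [gchoose, h0, h1]
  intro h; omega


noncomputable def mono (p r : ℕ) : Polynomial ℚ :=
  X * fprod ((p : ℚ) + 1) (p - 1) * fprod (2 * p) r

lemma mono_monic (p r : ℕ) : (mono p r).Monic :=
  ((monic_X.mul (fprod_monic _ _)).mul (fprod_monic _ _))

lemma mono_natDegree (p r : ℕ) (hp : 1 ≤ p) : (mono p r).natDegree = p + r := by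
  rw [mono, (monic_X.mul (fprod_monic _ _)).natDegree_mul (fprod_monic _ _),
    monic_X.natDegree_mul (fprod_monic _ _), natDegree_X, fprod_natDegree, fprod_natDegree]
  omega

def cpr (k p r : ℕ) : ℚ :=
  (-1 : ℚ) ^ p / p * (((p - 1).factorial : ℚ))⁻¹ * 3 ^ r * ((r.factorial : ℚ))⁻¹ *
    gchoose (p : ℚ) ((k : ℤ) - p - r)

noncomputable def Pk (k : ℕ) : Polynomial ℚ :=
  Polynomial.C ((3 : ℚ) ^ k / k.factorial) * fprod 0 k
  + ∑ p ∈ Finset.Icc 1 k, ∑ r ∈ Finset.range (k - p + 1),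
      Polynomial.C (cpr k p r) * mono p r

lemma Pk_eval (k : ℕ) (x : ℚ) : (Pk k).eval x = aP k x := by
  rw [Pk, aP]
  simp only [eval_add, eval_mul, eval_C, eval_finset_sum, eval_mul, eval_X,
    fprod_eval, Finset.mul_sum]
  congr 1
  · rw [gchoose_natCast]; ring_nf
  · refine Finset.sum_congr rfl fun p hp => Finset.sum_congr rfl fun r hr => ?_
    have hp1 : 1 ≤ p := (Finset.mem_Icc.mp hp).1
    rw [mono]
    simp only [eval_mul, eval_X, fprod_eval]
    rw [gchoose_sub_one _ p hp1, gchoose_natCast]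
    have e1 : x - ((p : ℚ) + 1) = x - p - 1 := by ring
    rw [cpr, e1]
    have hpne : (p : ℚ) ≠ 0 := Nat.cast_ne_zero.mpr (by omega)
    have h1 : ((p - 1).factorial : ℚ) ≠ 0 := Nat.cast_ne_zero.mpr (Nat.factorial_ne_zero _)
    have h2 : ((r.factorial : ℚ)) ≠ 0 := Nat.cast_ne_zero.mpr (Nat.factorial_ne_zero _)
    field_simp

lemma coeff_C_mul_monic {f : Polynomial ℚ} (hf : f.Monic) {n m : ℕ} (c : ℚ)
    (hd : f.natDegree = n) (h : n ≤ m) :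
    (Polynomial.C c * f).coeff m = if n = m then c else 0 := by
  rw [coeff_C_mul]
  rcases eq_or_lt_of_le h with h' | h'
  · subst h'; rw [← hd, hf.coeff_natDegree, if_pos rfl, mul_one]
  · rw [coeff_eq_zero_of_natDegree_lt (by omega), if_neg (by omega), mul_zero]

lemma ffall_zero (x : ℚ) : ffall x 0 = 1 := by simp [ffall]

lemma key_sum (k : ℕ) :
    (3 : ℚ) ^ k / k.factorial
      + ∑ p ∈ Finset.Icc 1 k,
          (-1 : ℚ) ^ p / p * (((p - 1).factorial : ℚ))⁻¹ * 3 ^ (k - p) *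
            (((k - p).factorial : ℚ))⁻¹
      = 2 ^ k / k.factorial := by
  have hterm : ∀ p ∈ Finset.Icc 1 k,
      (-1 : ℚ) ^ p / p * (((p - 1).factorial : ℚ))⁻¹ * 3 ^ (k - p) *
        (((k - p).factorial : ℚ))⁻¹
      = (-1 : ℚ) ^ p * 3 ^ (k - p) * (k.choose p) / k.factorial := by
    intro p hp
    rw [Finset.mem_Icc] at hp
    obtain ⟨hp1, hpk⟩ := hp
    have hkf : (k.factorial : ℚ) = (k.choose p) * p.factorial * (k - p).factorial := by
      exact_mod_cast (Nat.choose_mul_factorial_mul_factorial hpk).symm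
    have hpf : (p.factorial : ℚ) = p * (p - 1).factorial := by
      exact_mod_cast (Nat.mul_factorial_pred (by omega)).symm
    have hc : ((k.choose p : ℚ)) ≠ 0 := Nat.cast_ne_zero.mpr (Nat.choose_pos hpk).ne'
    have h1 : ((p - 1).factorial : ℚ) ≠ 0 := Nat.cast_ne_zero.mpr (Nat.factorial_ne_zero _)
    have h2 : (((k - p).factorial : ℚ)) ≠ 0 := Nat.cast_ne_zero.mpr (Nat.factorial_ne_zero _)
    have hpne : (p : ℚ) ≠ 0 := Nat.cast_ne_zero.mpr (by omega)
    rw [hkf, hpf]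
    field_simp
  rw [Finset.sum_congr rfl hterm]
  have hins : Finset.range (k + 1) = insert 0 (Finset.Icc 1 k) := by
    ext i; simp [Finset.mem_range, Finset.mem_Icc]; omega
  have hbin : ((2 : ℚ)) ^ k = ∑ p ∈ Finset.range (k + 1),
      (-1 : ℚ) ^ p * 3 ^ (k - p) * (k.choose p) := by
    have := add_pow (-1 : ℚ) 3 k
    norm_num at this
    rw [this]
  rw [eq_div_iff (Nat.cast_ne_zero.mpr (Nat.factorial_ne_zero k) : (k.factorial:ℚ) ≠ 0)]
  rw [hbin, hins, Finset.sum_insert (by simp)]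
  rw [add_mul, Finset.sum_mul]
  congr 1
  · field_simp
    simp
  · refine Finset.sum_congr rfl fun p hp => ?_
    rw [div_mul_cancel₀ _ (Nat.cast_ne_zero.mpr (Nat.factorial_ne_zero k))]

lemma Pk_coeff_k (k : ℕ) : (Pk k).coeff k = 2 ^ k / k.factorial := by
  rw [Pk, coeff_add, coeff_C_mul_monic (fprod_monic 0 k) _ (fprod_natDegree 0 k) le_rfl,
    if_pos rfl]
  rw [Polynomial.finset_sum_coeff]
  have hinner : ∀ p ∈ Finset.Icc 1 k,
      (∑ r ∈ Finset.range (k - p + 1), Polynomial.C (cpr k p r) * mono p r).coeff k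
      = (-1 : ℚ) ^ p / p * (((p - 1).factorial : ℚ))⁻¹ * 3 ^ (k - p) *
          (((k - p).factorial : ℚ))⁻¹ := by
    intro p hp
    rw [Finset.mem_Icc] at hp
    obtain ⟨hp1, hpk⟩ := hp
    rw [Polynomial.finset_sum_coeff]
    have step : ∀ r ∈ Finset.range (k - p + 1),
        (Polynomial.C (cpr k p r) * mono p r).coeff k
        = if r = k - p then cpr k p r else 0 := by
      intro r hr
      rw [Finset.mem_range] at hr
      rw [coeff_C_mul_monic (mono_monic p r) _ (mono_natDegree p r hp1) (by omega)]
      congr 1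
      simp only [eq_iff_iff]
      omega
    rw [Finset.sum_congr rfl step, Finset.sum_ite_eq' (Finset.range (k - p + 1)) (k - p)
      (fun r => cpr k p r), if_pos (Finset.mem_range.mpr (by omega))]
    have hz : (k : ℤ) - p - (k - p : ℕ) = 0 := by omega
    rw [cpr, hz]
    have : gchoose (p : ℚ) 0 = 1 := by simp [gchoose, ffall_zero]
    rw [this, mul_one]
  rw [Finset.sum_congr rfl hinner]
  exact key_sum k

lemma Pk_natDegree_le (k : ℕ) : (Pk k).natDegree ≤ k := by
  rw [Pk]
  refine le_trans (natDegree_add_le _ _) (max_le ?_ ?_)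
  · exact le_trans (natDegree_C_mul_le _ _) (le_of_eq (fprod_natDegree 0 k))
  · refine Polynomial.natDegree_sum_le_of_forall_le _ _ fun p hp => ?_
    refine Polynomial.natDegree_sum_le_of_forall_le _ _ fun r hr => ?_
    rw [Finset.mem_Icc] at hp
    rw [Finset.mem_range] at hr
    exact le_trans (natDegree_C_mul_le _ _)
      (by rw [mono_natDegree p r hp.1]; omega)

lemma aP_zero (k : ℕ) : aP k 0 = if k = 0 then 1 else 0 := by
  rw [aP]
  have h1 : ∀ p ∈ Finset.Icc 1 k, (-1 : ℚ) ^ p * ((0:ℚ) / p) *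
      gchoose ((0:ℚ) - p - 1) ((p : ℤ) - 1) *
      ∑ r ∈ Finset.range (k - p + 1),
        3 ^ r * gchoose ((0:ℚ) - 2 * p) r * gchoose (p : ℚ) ((k : ℤ) - p - r) = 0 := by
    intro p hp; simp
  rw [Finset.sum_congr rfl h1, Finset.sum_const, smul_zero, add_zero]
  rcases Nat.eq_zero_or_pos k with hk | hk
  · subst hk; simp [gchoose, ffall_zero]
  · rw [if_neg (by omega)]
    have : ffall 0 k = 0 := by
      apply Finset.prod_eq_zero (Finset.mem_range.mpr hk)
      simp
    simp [gchoose, this]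

/-- For each `k ≥ 0`, `x ↦ ã^P_k(x)` is a polynomial function: there is a unique
polynomial `P ∈ ℚ[x]` agreeing with it everywhere; `P` has degree exactly `k`,
leading coefficient `2^k/k!`, and constant coefficient `1` if `k = 0` and `0`
if `k ≥ 1`. -/
theorem aP_polynomial (k : ℕ) :
    ∃ P : Polynomial ℚ,
      (∀ x : ℚ, P.eval x = aP k x) ∧
      (∀ Q : Polynomial ℚ, (∀ x : ℚ, Q.eval x = aP k x) → Q = P) ∧
      P.natDegree = k ∧
      P.leadingCoeff = 2 ^ k / (k.factorial : ℚ) ∧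
      P.coeff 0 = (if k = 0 then 1 else 0) := by
  have hcoeff := Pk_coeff_k k
  have hne : (2 : ℚ) ^ k / k.factorial ≠ 0 := by
    positivity
  have hdeg : (Pk k).natDegree = k :=
    le_antisymm (Pk_natDegree_le k)
      (Polynomial.le_natDegree_of_ne_zero (by rw [hcoeff]; exact hne))
  refine ⟨Pk k, Pk_eval k, ?_, hdeg, ?_, ?_⟩
  · intro Q hQ
    apply Polynomial.funext
    intro x
    rw [hQ x, Pk_eval]
  · rw [Polynomial.leadingCoeff, hdeg, hcoeff]
  · rw [Polynomial.coeff_zero_eq_eval_zero, Pk_eval, aP_zero]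
end
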